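/- Let b = λ + iη with λ, η ∈ ℝ and λ > 0, and let 𝒫̂ₙ(b;x) = (2ⁿ(λ)ₙ/(2λ)ₙ)·𝒫ₙ(b;x) be the monic complementary Romanovski–Routh polynomials. Then for every real x there exists r > 0 such that for all real w with |w| < r, e^{2η·arccot(x)} / ( [(xw − 1)² + w²]^λ · e^{2η·arccot(x − w(x² + 1))} ) = Σ_{n=0}^{∞} (2λ)ₙ · 𝒫̂ₙ(b;x) · wⁿ/n!. -/

import Mathlib

open Real

/-- The continuous `arccot` decreasing from `π` to `0`. -/
noncomputable def arccot (x : ℝ) : ℝ := Real.pi / 2 - Real.arctan x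

/-- Complementary Romanovski–Routh polynomials `𝒫ₙ(b;x)` with `b = λ + iη`,
defined by the three-term recurrence (real version). -/
noncomputable def crr (lam eta : ℝ) : ℕ → ℝ → ℝ
  | 0, _ => 1
  | 1, x => x - eta / lam
  | n + 2, x =>
      (x - eta / (lam + n + 1)) * crr lam eta (n + 1) x -
        ((n + 1) * (2 * lam + n) / (4 * (lam + n) * (lam + n + 1))) *
          (x ^ 2 + 1) * crr lam eta n x

/-- Monic complementary Romanovski–Routh polynomials
`𝒫̂ₙ(b;x) = (2ⁿ(λ)ₙ/(2λ)ₙ)·𝒫ₙ(b;x)`. -/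
noncomputable def crrMonic (lam eta : ℝ) (n : ℕ) (x : ℝ) : ℝ :=
  (2 ^ n * Polynomial.eval lam (ascPochhammer ℝ n) /
      Polynomial.eval (2 * lam) (ascPochhammer ℝ n)) * crr lam eta n x

namespace CRR12
open Complex Finset Nat
open scoped NNReal ENNReal

open Complex Finset Nat
open scoped NNReal ENNReal

noncomputable def bt (b y : ℂ) (n : ℕ) : ℂ :=
  ((n ! : ℕ) : ℂ)⁻¹ * Polynomial.eval b (ascPochhammer ℂ n) * y ^ n

lemma bt_zero (b y : ℂ) : bt b y 0 = 1 := by simp [bt]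

lemma bt_succ (b y : ℂ) (k : ℕ) :
    ((k : ℂ) + 1) * bt b y (k + 1) = (b + k) * y * bt b y k := by
  have h : ((k + 1)! : ℂ) = ((k:ℂ) + 1) * (k ! : ℕ) := by
    push_cast [Nat.factorial_succ]; ring
  have hk : ((k:ℂ) + 1) ≠ 0 := by
    have : (0:ℝ) < (k:ℝ) + 1 := by positivity
    simpa using fun hc => by exact_mod_cast absurd (congrArg Complex.re hc) (by simp; positivity)
  have hf : ((k ! : ℕ) : ℂ) ≠ 0 := Nat.cast_ne_zero.2 (Nat.factorial_ne_zero k)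
  unfold bt
  rw [ascPochhammer_succ_eval, h]
  field_simp
  ring

lemma iter_deriv_cpow (b : ℂ) (n : ℕ) :
    ∀ z ∈ Metric.ball (0:ℂ) 1,
      iteratedDeriv n (fun z : ℂ => (1 - z) ^ (-b)) z
        = Polynomial.eval b (ascPochhammer ℂ n) * (1 - z) ^ (-b - n) := by
  induction n with
  | zero => intro z _; simp
  | succ n ih =>
    intro z hz
    have hopen : ∀ᶠ w in nhds z, w ∈ Metric.ball (0:ℂ) 1 :=
      Metric.isOpen_ball.eventually_mem hz
    rw [iteratedDeriv_succ]
    have heq : deriv (iteratedDeriv n (fun z : ℂ => (1 - z) ^ (-b))) z =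
        deriv (fun w : ℂ => Polynomial.eval b (ascPochhammer ℂ n) * (1 - w) ^ (-b - n)) z := by
      apply Filter.EventuallyEq.deriv_eq
      filter_upwards [hopen] with w hw using ih w hw
    rw [heq]
    have hre : (0:ℝ) < (1 - z).re := by
      have hz1 : ‖z‖ < 1 := by simpa [Metric.mem_ball] using hz
      have : |z.re| ≤ ‖z‖ := Complex.abs_re_le_norm z
      simp only [Complex.sub_re, Complex.one_re]
      have := abs_le.1 this
      linarith [this.2]
    have hslit : (1 - z) ∈ Complex.slitPlane := Or.inl hre
    have hd : HasDerivAt (fun w : ℂ => (1 - w) ^ (-b - n))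
        ((-b - n) * (1 - z) ^ (-b - n - 1) * (-1)) z :=
      HasDerivAt.cpow_const (by simpa using (hasDerivAt_id z).const_sub 1) hslit
    rw [((hd.const_mul (Polynomial.eval b (ascPochhammer ℂ n)))).deriv]
    rw [ascPochhammer_succ_eval]
    have hexp : (-b - (n:ℂ) - 1) = -b - ((n:ℕ)+1 : ℕ) := by push_cast; ring
    rw [hexp]
    push_cast
    ring

lemma binom_hasSum (b : ℂ) {y : ℂ} (hy : ‖y‖ < 3/4) :
    HasSum (fun n => bt b y n) ((1 - y) ^ (-b)) := by
  have hdiff : DifferentiableOn ℂ (fun z : ℂ => (1 - z) ^ (-b))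
      (Metric.closedBall 0 ((3/4 : ℝ≥0) : ℝ)) := by
    intro z hz
    have hz' : ‖z‖ ≤ 3/4 := by
      simpa [Metric.mem_closedBall, _root_.dist_zero_right] using hz
    have hre : (0:ℝ) < (1 - z).re := by
      have : |z.re| ≤ ‖z‖ := Complex.abs_re_le_norm z
      have := (abs_le.1 this).2
      simp only [Complex.sub_re, Complex.one_re]
      linarith
    have : DifferentiableAt ℂ (fun z : ℂ => (1 - z) ^ (-b)) z := by
      apply DifferentiableAt.cpow
      · exact (differentiable_const (1:ℂ)).differentiableAt.sub differentiableAt_id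
      · exact differentiableAt_const _
      · exact Or.inl hre
    exact this.differentiableWithinAt
  have h := hdiff.hasFPowerSeriesOnBall (by norm_num : 0 < (3/4 : ℝ≥0))
  have hy' : y ∈ Metric.eball (0:ℂ) ((3/4 : ℝ≥0) : ℝ≥0∞) := by
    rw [mem_emetric_ball_zero_iff]
    have : (‖y‖₊ : ℝ) < ((3/4 : ℝ≥0) : ℝ) := by simpa using hy
    exact_mod_cast this
  have hs := h.hasSum_iteratedFDeriv hy'
  simp only [zero_add] at hs
  convert hs using 2 with n
  · rfl
  rw [iteratedFDeriv_apply_eq_iteratedDeriv_mul_prod]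
  rw [iter_deriv_cpow b n 0 (by simp)]
  simp only [sub_zero, Complex.one_cpow, mul_one, Finset.prod_const, Finset.card_univ,
    Fintype.card_fin, smul_eq_mul]
  unfold bt
  ring

lemma binom_summable (b : ℂ) {y : ℂ} (hy : ‖y‖ ≤ 1/2) :
    Summable fun n => ‖bt b y n‖ := by
  apply summable_of_ratio_norm_eventually_le (r := 3/4) (by norm_num)
  filter_upwards [Filter.eventually_ge_atTop ⌈2 * ‖b‖⌉₊] with n hn
  have hk : ((n:ℂ) + 1) ≠ 0 := by
    exact_mod_cast Nat.cast_add_one_ne_zero (R := ℂ) n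
  have key : bt b y (n+1) = ((b + n) * y / ((n:ℂ)+1)) * bt b y n := by
    field_simp
    linear_combination bt_succ b y n
  rw [norm_norm, norm_norm, key, norm_mul]
  have hb : 2 * ‖b‖ ≤ (n:ℝ) := le_trans (Nat.le_ceil _) (by exact_mod_cast hn)
  have h1 : ‖(b + n) * y / ((n:ℂ)+1)‖ ≤ 3/4 := by
    rw [norm_div, norm_mul]
    have hbn : ‖b + (n:ℂ)‖ ≤ ‖b‖ + n := by
      calc ‖b + (n:ℂ)‖ ≤ ‖b‖ + ‖(n:ℂ)‖ := norm_add_le _ _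
        _ = ‖b‖ + n := by simp
    have hnn : ‖(n:ℂ) + 1‖ = (n:ℝ) + 1 := by
      have : ((n:ℂ) + 1) = ((n+1 : ℕ) : ℂ) := by push_cast; ring
      rw [this, Complex.norm_natCast]; push_cast; ring
    rw [hnn]
    rw [div_le_iff₀ (by positivity)]
    have hy0 : (0:ℝ) ≤ ‖y‖ := norm_nonneg _
    nlinarith [norm_nonneg (b + (n:ℂ)), mul_le_mul_of_nonneg_right hbn hy0]
  calc ‖(b + n) * y / ((n:ℂ)+1)‖ * ‖bt b y n‖ ≤ 3/4 * ‖bt b y n‖ :=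
    mul_le_mul_of_nonneg_right h1 (norm_nonneg _)

noncomputable def tt (b b' u v : ℂ) (p : ℕ × ℕ) : ℂ := bt b u p.1 * bt b' v p.2

noncomputable def SS (b b' u v : ℂ) (n : ℕ) : ℂ :=
  ∑ p ∈ antidiagonal n, tt b b' u v p

noncomputable def DD (b b' u v : ℂ) (n : ℕ) : ℂ :=
  ∑ p ∈ antidiagonal n, (p.1 : ℂ) * tt b b' u v p

noncomputable def DD' (b b' u v : ℂ) (n : ℕ) : ℂ :=
  ∑ p ∈ antidiagonal n, (p.2 : ℂ) * tt b b' u v p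

lemma SS_swap (b b' u v : ℂ) (n : ℕ) : SS b b' u v n = SS b' b v u n := by
  rw [SS, ← Finset.Nat.sum_antidiagonal_swap]
  exact Finset.sum_congr rfl fun p _ => by simp [tt, mul_comm]

lemma DD'_swap (b b' u v : ℂ) (n : ℕ) : DD' b b' u v n = DD b' b v u n := by
  rw [DD, ← Finset.Nat.sum_antidiagonal_swap]
  exact Finset.sum_congr rfl fun p _ => by simp only [Prod.fst_swap, Prod.snd_swap, tt]; ring

lemma L1 (b b' u v : ℂ) (n : ℕ) :
    DD b b' u v (n + 1) = u * (b * SS b b' u v n + DD b b' u v n) := by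
  rw [DD, Finset.Nat.sum_antidiagonal_succ]
  have h0 : ((0:ℕ) : ℂ) * tt b b' u v (0, n+1) = 0 := by simp
  rw [h0, zero_add]
  have : ∀ p ∈ antidiagonal n, ((p.1 + 1 : ℕ) : ℂ) * tt b b' u v (p.1 + 1, p.2)
      = u * b * tt b b' u v p + u * ((p.1 : ℂ) * tt b b' u v p) := by
    intro p _
    have := bt_succ b u p.1
    simp only [tt]
    push_cast
    calc ((p.1:ℂ) + 1) * (bt b u (p.1+1) * bt b' v p.2)
        = (((p.1:ℂ) + 1) * bt b u (p.1+1)) * bt b' v p.2 := by ring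
      _ = ((b + p.1) * u * bt b u p.1) * bt b' v p.2 := by rw [this]
      _ = _ := by ring
  rw [Finset.sum_congr rfl this, Finset.sum_add_distrib, ← Finset.mul_sum, ← Finset.mul_sum,
    ← SS, ← DD]
  ring

lemma L2 (b b' u v : ℂ) (n : ℕ) :
    DD' b b' u v (n + 1) = v * (b' * SS b b' u v n + DD' b b' u v n) := by
  rw [DD'_swap, L1, ← SS_swap, ← DD'_swap]

lemma Rel (b b' u v : ℂ) (n : ℕ) :
    DD b b' u v n + DD' b b' u v n = (n : ℂ) * SS b b' u v n := by
  rw [DD, DD', SS, ← Finset.sum_add_distrib, Finset.mul_sum]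
  refine Finset.sum_congr rfl fun p hp => ?_
  have := Finset.HasAntidiagonal.mem_antidiagonal.1 hp
  have : ((p.1 : ℂ) + p.2) = (n : ℂ) := by exact_mod_cast congrArg (Nat.cast (R := ℂ)) this
  linear_combination tt b b' u v p * this

lemma EE (b b' u v : ℂ) (n : ℕ) :
    ((n : ℂ) + 1) * SS b b' u v (n + 1)
      = u * (b * SS b b' u v n + DD b b' u v n)
        + v * (b' * SS b b' u v n + DD' b b' u v n) := by
  have h := Rel b b' u v (n + 1)
  push_cast at h
  rw [← L1, ← L2, ← h]

lemma REC (b b' u v : ℂ) (k : ℕ) :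
    ((k : ℂ) + 2) * SS b b' u v (k + 2)
      = (u * b + v * b' + ((k : ℂ) + 1) * (u + v)) * SS b b' u v (k + 1)
        - u * v * (b + b' + k) * SS b b' u v k := by
  have E1 := EE b b' u v (k + 1)
  push_cast at E1
  have E0 := EE b b' u v k
  have hD := L1 b b' u v k
  have hD' := L2 b b' u v k
  have hR := Rel b b' u v k
  linear_combination E1 + u * hD + v * hD' - (u + v) * E0 - u * v * hR

lemma SS_zero (b b' u v : ℂ) : SS b b' u v 0 = 1 := by
  simp [SS, tt, bt_zero]

lemma SS_one (b b' u v : ℂ) : SS b b' u v 1 = b * u + b' * v := by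
  rw [SS, Finset.Nat.sum_antidiagonal_succ, Finset.Nat.antidiagonal_zero,
    Finset.sum_singleton]
  simp only [tt, bt_zero]
  have h1 : bt b u 1 = b * u := by
    simp [bt, ascPochhammer_one]
  have h2 : bt b' v 1 = b' * v := by
    simp [bt, ascPochhammer_one]
  rw [h1, h2]
  ring

lemma SS_scale (b b' u v w : ℂ) (n : ℕ) :
    SS b b' (w * u) (w * v) n = w ^ n * SS b b' u v n := by
  rw [SS, SS, Finset.mul_sum]
  refine Finset.sum_congr rfl fun p hp => ?_
  have hmem := Finset.HasAntidiagonal.mem_antidiagonal.1 hp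
  simp only [tt, bt, mul_pow]
  rw [← hmem, pow_add]
  ring



noncomputable def aa (lam eta x : ℝ) (n : ℕ) : ℝ :=
  2 ^ n * Polynomial.eval lam (ascPochhammer ℝ n) * crr lam eta n x / (n.factorial : ℝ)

lemma aa_zero (lam eta x : ℝ) : aa lam eta x 0 = 1 := by simp [aa, crr]

lemma aa_one (lam eta x : ℝ) (hlam : lam ≠ 0) :
    aa lam eta x 1 = 2 * lam * x - 2 * eta := by
  simp only [aa, crr, ascPochhammer_one, Polynomial.eval_X, Nat.factorial_one]
  field_simp
  ring

lemma aa_rec (lam eta x : ℝ) (hlam : 0 < lam) (k : ℕ) :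
    ((k : ℝ) + 2) * aa lam eta x (k + 2)
      = (2 * lam * x - 2 * eta + 2 * ((k : ℝ) + 1) * x) * aa lam eta x (k + 1)
        - (x ^ 2 + 1) * (2 * lam + k) * aa lam eta x k := by
  have h1 : (0:ℝ) < lam + k := by positivity
  have h2 : (0:ℝ) < lam + k + 1 := by positivity
  have hf : ((k.factorial : ℝ)) ≠ 0 := Nat.cast_ne_zero.2 k.factorial_ne_zero
  have hcrr : crr lam eta (k + 2) x
      = (x - eta / (lam + k + 1)) * crr lam eta (k + 1) x -
        (((k:ℝ) + 1) * (2 * lam + k) / (4 * (lam + k) * (lam + k + 1))) *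
          (x ^ 2 + 1) * crr lam eta k x := rfl
  have hp2 : Polynomial.eval lam (ascPochhammer ℝ (k + 2))
      = Polynomial.eval lam (ascPochhammer ℝ k) * (lam + k) * (lam + k + 1) := by
    rw [show k + 2 = (k + 1) + 1 from rfl, ascPochhammer_succ_eval, ascPochhammer_succ_eval]
    push_cast; ring
  have hp1 : Polynomial.eval lam (ascPochhammer ℝ (k + 1))
      = Polynomial.eval lam (ascPochhammer ℝ k) * (lam + k) := by
    rw [ascPochhammer_succ_eval]
  have hf2 : ((k+2).factorial : ℝ) = ((k:ℝ) + 2) * (((k:ℝ) + 1) * (k.factorial : ℝ)) := by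
    rw [Nat.factorial_succ, Nat.factorial_succ]; push_cast; ring
  have hf1 : ((k+1).factorial : ℝ) = ((k:ℝ) + 1) * (k.factorial : ℝ) := by
    rw [Nat.factorial_succ]; push_cast; ring
  unfold aa
  rw [hcrr, hp2, hp1, hf2, hf1]
  have hk1 : ((k:ℝ) + 1) ≠ 0 := by positivity
  have hk2 : ((k:ℝ) + 2) ≠ 0 := by positivity
  field_simp
  ring

lemma SS_eq_aa (lam eta x : ℝ) (hlam : 0 < lam) :
    ∀ n, SS ((lam:ℂ) + (eta:ℂ) * Complex.I) ((lam:ℂ) - (eta:ℂ) * Complex.I)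
        ((x:ℂ) + Complex.I) ((x:ℂ) - Complex.I) n = ((aa lam eta x n : ℝ) : ℂ) := by
  have key : ∀ m, SS ((lam:ℂ) + (eta:ℂ) * Complex.I) ((lam:ℂ) - (eta:ℂ) * Complex.I)
        ((x:ℂ) + Complex.I) ((x:ℂ) - Complex.I) m = ((aa lam eta x m : ℝ) : ℂ) ∧
      SS ((lam:ℂ) + (eta:ℂ) * Complex.I) ((lam:ℂ) - (eta:ℂ) * Complex.I)
        ((x:ℂ) + Complex.I) ((x:ℂ) - Complex.I) (m+1) = ((aa lam eta x (m+1) : ℝ) : ℂ) := by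
    intro m
    induction m with
    | zero =>
      constructor
      · rw [SS_zero, aa_zero]; norm_num
      · rw [SS_one, aa_one lam eta x hlam.ne']
        push_cast
        linear_combination (2*(eta:ℂ)) * Complex.I_sq
    | succ m ih =>
      refine ⟨ih.2, ?_⟩
      have hrec := REC ((lam:ℂ) + (eta:ℂ) * Complex.I) ((lam:ℂ) - (eta:ℂ) * Complex.I)
        ((x:ℂ) + Complex.I) ((x:ℂ) - Complex.I) m
      rw [ih.1, ih.2] at hrec
      have hreal := aa_rec lam eta x hlam m
      have hrealC := congrArg (fun t : ℝ => (t : ℂ)) hreal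
      push_cast at hrealC
      have hm2 : ((m:ℂ) + 2) ≠ 0 := by
        have : ((m + 2 : ℕ) : ℂ) ≠ 0 := Nat.cast_ne_zero.2 (by omega)
        push_cast at this
        exact this
      apply mul_left_cancel₀ hm2
      rw [hrec]
      linear_combination (-1 : ℂ) * hrealC +
        (2*(eta:ℂ)*((aa lam eta x (m+1) : ℝ) : ℂ)
          + (2*(lam:ℂ)+(m:ℂ))*((aa lam eta x m : ℝ) : ℂ)) * Complex.I_sq
  exact fun n => (key n).1


lemma value_eq (lam eta x w : ℝ) (hre : 0 < 1 - w * x) :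
    ((1 - (w:ℂ) * ((x:ℂ) + Complex.I)) ^ (-((lam:ℂ) + (eta:ℂ) * Complex.I)))
      * ((1 - (w:ℂ) * ((x:ℂ) - Complex.I)) ^ (-((lam:ℂ) - (eta:ℂ) * Complex.I)))
    = ((Real.exp (2 * eta * arccot x) /
        (((x * w - 1) ^ 2 + w ^ 2) ^ lam *
          Real.exp (2 * eta * arccot (x - w * (x ^ 2 + 1)))) : ℝ) : ℂ) := by
  set z : ℂ := 1 - (w:ℂ) * ((x:ℂ) + Complex.I) with hz
  have hzre : z.re = 1 - w * x := by simp [hz]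
  have hzim : z.im = -w := by simp [hz]
  have hrepos : 0 < z.re := by rw [hzre]; exact hre
  have hz0 : z ≠ 0 := by
    intro h
    rw [h] at hrepos
    simp at hrepos
  have habs_pos : 0 < ‖z‖ := norm_pos_iff.mpr hz0
  have hconjz : 1 - (w:ℂ) * ((x:ℂ) - Complex.I) = (starRingEnd ℂ) z := by
    apply Complex.ext <;> simp [hz]
  have hargne : z.arg ≠ π := by
    intro h
    have := (Complex.arg_eq_pi_iff.1 h).1
    linarith
  have hcc : ((starRingEnd ℂ) z) ^ (-((lam:ℂ) - (eta:ℂ) * Complex.I))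
      = (starRingEnd ℂ) (z ^ (-((lam:ℂ) + (eta:ℂ) * Complex.I))) := by
    rw [Complex.conj_cpow _ _ hargne]
    congr 2
    apply Complex.ext <;> simp
  rw [hconjz, hcc, Complex.mul_conj]
  congr 1
  -- now a real identity
  have hA : ‖z‖ ^ (2:ℕ) = (x*w-1)^2 + w^2 := by
    rw [Complex.sq_norm, Complex.normSq_apply, hzre, hzim]; ring
  have habs : ‖z ^ (-((lam:ℂ) + (eta:ℂ) * Complex.I))‖
      = ‖z‖ ^ (-lam) / Real.exp (z.arg * (-eta)) := by
    rw [Complex.norm_cpow_of_ne_zero hz0]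
    congr 2 <;> simp
  -- arg computation
  have harglt : z.arg < π / 2 := by
    rcases lt_or_eq_of_le (Complex.arg_le_pi_div_two_iff.2 (Or.inl hrepos.le)) with h | h
    · exact h
    · exact absurd ((Complex.arg_eq_pi_div_two_iff.1 h).1) (by linarith)
  have harggt : -(π / 2) < z.arg := by
    rcases lt_or_eq_of_le (Complex.neg_pi_div_two_le_arg_iff.2 (Or.inl hrepos.le)) with h | h
    · exact h
    · exact absurd ((Complex.arg_eq_neg_pi_div_two_iff.1 h.symm).1) (by linarith)
  have harg1 : z.arg = Real.arctan (-w / (1 - w * x)) := by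
    have h := Real.arctan_tan harggt harglt
    rw [Complex.tan_arg, hzre, hzim] at h
    exact h.symm
  have hprod : 0 < (1 + x^2) * (1 - w*x) := by positivity
  have harctan : Real.arctan (x - w*(x^2+1)) + Real.arctan (-x)
      = Real.arctan (-w / (1 - w*x)) := by
    rw [Real.arctan_add (by nlinarith)]
    congr 1
    have h2 : 1 - (x - w*(x^2+1)) * (-x) = (1 + x^2) * (1 - w*x) := by ring
    rw [h2]
    rw [div_eq_div_iff (by positivity) hre.ne']
    ring
  have harg : z.arg = Real.arctan (x - w*(x^2+1)) - Real.arctan x := by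
    rw [harg1, ← harctan, Real.arctan_neg]; ring
  -- final real computation
  rw [Complex.normSq_eq_norm_sq, habs, ← hA]
  rw [Real.rpow_def_of_pos habs_pos, Real.rpow_def_of_pos (pow_pos habs_pos 2), Real.log_pow]
  rw [div_pow, ← Real.exp_nat_mul, ← Real.exp_nat_mul, eq_div_iff (by positivity),
    div_mul_eq_mul_div, mul_comm, ← mul_assoc, ← Real.exp_add, ← Real.exp_add,
    ← Real.exp_sub]
  congr 1
  unfold arccot
  rw [harg]
  push_cast
  ring

end CRR12

theorem stmt12 (lam eta : ℝ) (hlam : 0 < lam) (x : ℝ) :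
    ∃ r > 0, ∀ w : ℝ, |w| < r →
      HasSum
        (fun n : ℕ =>
          Polynomial.eval (2 * lam) (ascPochhammer ℝ n) * crrMonic lam eta n x *
            w ^ n / Nat.factorial n)
        (Real.exp (2 * eta * arccot x) /
          (((x * w - 1) ^ 2 + w ^ 2) ^ lam *
            Real.exp (2 * eta * arccot (x - w * (x ^ 2 + 1))))) := by
  refine ⟨1 / (2 * (|x| + 1) * (x ^ 2 + 1)), by positivity, fun w hw => ?_⟩
  rw [lt_div_iff₀ (by positivity)] at hw
  have habs0 : (0:ℝ) ≤ |w| := abs_nonneg w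
  have hxq : |x| ≤ (|x| + 1) * (x ^ 2 + 1) := by nlinarith [abs_nonneg x, sq_nonneg x]
  have hwx0 : |w| * |x| ≤ |w| * ((|x| + 1) * (x ^ 2 + 1)) :=
    mul_le_mul_of_nonneg_left hxq habs0
  have hre : 0 < 1 - w * x := by
    have h1 : w * x ≤ |w| * |x| := by
      calc w * x ≤ |w * x| := le_abs_self _
        _ = |w| * |x| := abs_mul w x
    nlinarith
  have hu2 : ‖(x:ℂ) + Complex.I‖ ^ 2 = x ^ 2 + 1 := by
    rw [Complex.sq_norm, Complex.normSq_apply]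
    simp
    ring
  have hv2 : ‖(x:ℂ) - Complex.I‖ ^ 2 = x ^ 2 + 1 := by
    rw [Complex.sq_norm, Complex.normSq_apply]
    simp
    ring
  have hnu : ‖(x:ℂ) + Complex.I‖ ≤ x ^ 2 + 1 := by
    nlinarith [norm_nonneg ((x:ℂ) + Complex.I), sq_nonneg (‖(x:ℂ) + Complex.I‖ - 1), sq_nonneg x]
  have hnv : ‖(x:ℂ) - Complex.I‖ ≤ x ^ 2 + 1 := by
    nlinarith [norm_nonneg ((x:ℂ) - Complex.I), sq_nonneg (‖(x:ℂ) - Complex.I‖ - 1), sq_nonneg x]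
  have hwnorm : ‖(w:ℂ)‖ = |w| := by
    rw [Complex.norm_real, Real.norm_eq_abs]
  have hwu : ‖(w:ℂ) * ((x:ℂ) + Complex.I)‖ ≤ 1 / 2 := by
    rw [norm_mul, hwnorm]
    have h1 : |w| * ‖(x:ℂ) + Complex.I‖ ≤ |w| * (x ^ 2 + 1) :=
      mul_le_mul_of_nonneg_left hnu habs0
    nlinarith [mul_nonneg (mul_nonneg habs0 (show (0:ℝ) ≤ x ^ 2 + 1 by positivity)) (abs_nonneg x)]
  have hwv : ‖(w:ℂ) * ((x:ℂ) - Complex.I)‖ ≤ 1 / 2 := by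
    rw [norm_mul, hwnorm]
    have h1 : |w| * ‖(x:ℂ) - Complex.I‖ ≤ |w| * (x ^ 2 + 1) :=
      mul_le_mul_of_nonneg_left hnv habs0
    nlinarith [mul_nonneg (mul_nonneg habs0 (show (0:ℝ) ≤ x ^ 2 + 1 by positivity)) (abs_nonneg x)]
  have h1 := CRR12.binom_hasSum ((lam:ℂ) + (eta:ℂ) * Complex.I)
    (lt_of_le_of_lt hwu (by norm_num) : ‖(w:ℂ) * ((x:ℂ) + Complex.I)‖ < 3/4)
  have h2 := CRR12.binom_hasSum ((lam:ℂ) - (eta:ℂ) * Complex.I)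
    (lt_of_le_of_lt hwv (by norm_num) : ‖(w:ℂ) * ((x:ℂ) - Complex.I)‖ < 3/4)
  have s1 := CRR12.binom_summable ((lam:ℂ) + (eta:ℂ) * Complex.I) hwu
  have s2 := CRR12.binom_summable ((lam:ℂ) - (eta:ℂ) * Complex.I) hwv
  have sp := summable_norm_sum_mul_antidiagonal_of_summable_norm s1 s2
  have sc := sp.of_norm
  have ht := tsum_mul_tsum_eq_tsum_sum_antidiagonal_of_summable_norm s1 s2
  have hsum0 : HasSum
      (fun n => ∑ kl ∈ Finset.HasAntidiagonal.antidiagonal n,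
        CRR12.bt ((lam:ℂ) + (eta:ℂ) * Complex.I) ((w:ℂ) * ((x:ℂ) + Complex.I)) kl.1 *
        CRR12.bt ((lam:ℂ) - (eta:ℂ) * Complex.I) ((w:ℂ) * ((x:ℂ) - Complex.I)) kl.2)
      ((1 - (w:ℂ) * ((x:ℂ) + Complex.I)) ^ (-((lam:ℂ) + (eta:ℂ) * Complex.I)) *
        (1 - (w:ℂ) * ((x:ℂ) - Complex.I)) ^ (-((lam:ℂ) - (eta:ℂ) * Complex.I))) := by
    have hs := sc.hasSum
    rwa [← ht, h1.tsum_eq, h2.tsum_eq] at hs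
  have hterm : ∀ n : ℕ, (∑ kl ∈ Finset.HasAntidiagonal.antidiagonal n,
        CRR12.bt ((lam:ℂ) + (eta:ℂ) * Complex.I) ((w:ℂ) * ((x:ℂ) + Complex.I)) kl.1 *
        CRR12.bt ((lam:ℂ) - (eta:ℂ) * Complex.I) ((w:ℂ) * ((x:ℂ) - Complex.I)) kl.2)
      = ((CRR12.aa lam eta x n * w ^ n : ℝ) : ℂ) := by
    intro n
    have hS : (∑ kl ∈ Finset.HasAntidiagonal.antidiagonal n,
        CRR12.bt ((lam:ℂ) + (eta:ℂ) * Complex.I) ((w:ℂ) * ((x:ℂ) + Complex.I)) kl.1 *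
        CRR12.bt ((lam:ℂ) - (eta:ℂ) * Complex.I) ((w:ℂ) * ((x:ℂ) - Complex.I)) kl.2)
        = CRR12.SS ((lam:ℂ) + (eta:ℂ) * Complex.I) ((lam:ℂ) - (eta:ℂ) * Complex.I)
            ((w:ℂ) * ((x:ℂ) + Complex.I)) ((w:ℂ) * ((x:ℂ) - Complex.I)) n := rfl
    rw [hS, CRR12.SS_scale, CRR12.SS_eq_aa lam eta x hlam n]
    push_cast
    try ring
  rw [funext hterm] at hsum0
  rw [CRR12.value_eq lam eta x w hre] at hsum0
  have hreal := Complex.hasSum_ofReal.1 hsum0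
  have hfun : (fun n : ℕ =>
      Polynomial.eval (2 * lam) (ascPochhammer ℝ n) * crrMonic lam eta n x *
        w ^ n / Nat.factorial n) = fun n => CRR12.aa lam eta x n * w ^ n := by
    funext n
    have hpos : (0:ℝ) < Polynomial.eval (2 * lam) (ascPochhammer ℝ n) :=
      ascPochhammer_pos n (2 * lam) (by positivity)
    have hfac : ((Nat.factorial n : ℕ) : ℝ) ≠ 0 := Nat.cast_ne_zero.2 (Nat.factorial_ne_zero n)
    unfold crrMonic CRR12.aa
    field_simp
    try ring
  rw [hfun]
  exact hreal
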